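/- Let i, j, k be pairwise distinct indices in {1, …, 2g+2}. Choose symmetric ratios for (i,j), for (i,k) and for (j,k), with associated symmetric discriminants D_{ij}, D_{ik} and symmetric roots ℓ_{jki}. Then D_{ij}² = (ℓ_{jki}^{4g})^{2g+1} · D_{ik}²; that is, D_{ij} = ℓ_{jki}^{2g(2g+1)}·D_{ik} up to a root of unity, and the relation between the squares is independent of all choices of symmetric ratios. -/

import Mathlib

open Finset


lemma pair_prod_insert {n : ℕ} {K : Type*} [CommMonoid K] (f : Fin n → Fin n → K)
    (hf : ∀ x y, f x y = f y x) (a : Fin n) (s : Finset (Fin n)) (ha : a ∉ s) :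
    ∏ m ∈ insert a s, ∏ m' ∈ (insert a s).filter (fun m' => m < m'), f m m'
      = (∏ m ∈ s, f a m) * ∏ m ∈ s, ∏ m' ∈ s.filter (fun m' => m < m'), f m m' := by
  rw [Finset.prod_insert ha]
  have h1 : (insert a s).filter (fun m' => a < m') = s.filter (fun m' => a < m') := by
    rw [Finset.filter_insert]; simp
  have h2 : ∀ m ∈ s, ∏ m' ∈ (insert a s).filter (fun m' => m < m'), f m m' =
      (if m < a then f m a else 1) * ∏ m' ∈ s.filter (fun m' => m < m'), f m m' := by
    intro m hm
    by_cases h : m < a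
    · rw [Finset.filter_insert, if_pos h, Finset.prod_insert (by simp [ha]), if_pos h]
    · rw [Finset.filter_insert, if_neg h, if_neg h, one_mul]
  have h3 : (∏ m' ∈ s.filter (fun m' => a < m'), f a m') *
      ∏ m ∈ s, (if m < a then f m a else 1) = ∏ m ∈ s, f a m := by
    have h4 : ∏ m ∈ s, (if m < a then f m a else 1)
        = ∏ m ∈ s.filter (fun m => m < a), f a m := by
      rw [Finset.prod_filter]
      exact Finset.prod_congr rfl (fun m hm => by split <;> simp [hf])
    rw [h4, ← Finset.prod_filter_mul_prod_filter_not s (fun m => a < m)]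
    congr 1
    apply Finset.prod_congr _ (fun _ _ => rfl)
    apply Finset.filter_congr
    intro m hm
    have hma : m ≠ a := fun h => ha (h ▸ hm)
    simp only [not_lt]
    exact ⟨le_of_lt, fun h => lt_of_le_of_ne h hma⟩
  rw [h1, Finset.prod_congr rfl h2, Finset.prod_mul_distrib, ← mul_assoc, h3]

lemma pair_prod_const' {n : ℕ} {K : Type*} [CommMonoid K] (f : Fin n → K)
    (s : Finset (Fin n)) :
    ∏ m ∈ s, ∏ m' ∈ s.filter (fun m' => m < m'), (f m * f m')
      = ∏ m ∈ s, f m ^ (s.card - 1) := by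
  induction s using Finset.induction with
  | empty => simp
  | @insert a s ha ih =>
    rw [pair_prod_insert (fun x y => f x * f y) (fun x y => mul_comm _ _) a s ha, ih,
      Finset.prod_insert ha, Finset.prod_mul_distrib, Finset.prod_const,
      Finset.card_insert_of_notMem ha]
    simp only [Nat.add_sub_cancel]
    rcases Finset.eq_empty_or_nonempty s with rfl | hs
    · simp
    · have hc : 1 ≤ s.card := Finset.card_pos.mpr hs
      have key : ∀ m : Fin n, m ∈ s → f m ^ s.card = f m ^ (s.card - 1) * f m := by
        intro m _
        rw [show s.card = s.card - 1 + 1 from (Nat.sub_add_cancel hc).symm, pow_succ]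
        simp [Nat.sub_add_cancel hc]
      rw [Finset.prod_congr rfl key, Finset.prod_mul_distrib]
      ac_rfl

lemma discr_formula {n : ℕ} {K : Type*} [Field K] (α : Fin n → K) (a b : Fin n) (p : K)
    (S : Finset (Fin n)) (hb : ∀ m ∈ S, α b - α m ≠ 0) (c : ℕ) (hc : S.card = c + 1) :
    (∏ m ∈ S, p * (α a - α m) / (α b - α m)) ^ 2 *
      ∏ m ∈ S, ∏ m' ∈ S.filter (fun m' => m < m'),
        (p * (α a - α m) / (α b - α m) - p * (α a - α m') / (α b - α m')) ^ 2
    = p ^ ((c + 1) * (c + 2)) * (α a - α b) ^ ((c + 1) * c) *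
      (∏ m ∈ S, (α a - α m)) ^ 2 *
      (∏ m ∈ S, ∏ m' ∈ S.filter (fun m' => m < m'), (α m - α m') ^ 2) /
      (∏ m ∈ S, (α b - α m)) ^ (2 * (c + 1)) := by
  have hBne : (∏ m ∈ S, (α b - α m)) ≠ 0 := Finset.prod_ne_zero_iff.mpr hb
  have h1 : (∏ m ∈ S, p * (α a - α m) / (α b - α m))
      = p ^ (c + 1) * (∏ m ∈ S, (α a - α m)) / (∏ m ∈ S, (α b - α m)) := by
    rw [Finset.prod_div_distrib, Finset.prod_mul_distrib, Finset.prod_const, hc]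
  have h2 : ∀ m ∈ S, ∀ m' ∈ S,
      (p * (α a - α m) / (α b - α m) - p * (α a - α m') / (α b - α m')) ^ 2 *
        ((α b - α m) ^ 2 * (α b - α m') ^ 2)
      = ((p * (α a - α b)) * (p * (α a - α b))) * (α m - α m') ^ 2 := by
    intro m hm m' hm'
    have h := hb m hm
    have h' := hb m' hm'
    field_simp
    ring
  have e1 : ((∏ m ∈ S, (α b - α m)) ^ 2) ^ c
      = ∏ m ∈ S, ∏ m' ∈ S.filter (fun m' => m < m'),
          ((α b - α m) ^ 2 * (α b - α m') ^ 2) := by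
    rw [pair_prod_const' (fun m => (α b - α m) ^ 2) S, hc]
    simp only [Nat.add_sub_cancel]
    rw [Finset.prod_pow, Finset.prod_pow]
  have e2 : p ^ (c * (c + 1)) * (α a - α b) ^ (c * (c + 1))
      = ∏ m ∈ S, ∏ m' ∈ S.filter (fun m' => m < m'),
          ((p * (α a - α b)) * (p * (α a - α b))) := by
    rw [pair_prod_const' (fun _ => p * (α a - α b)) S, hc]
    simp only [Nat.add_sub_cancel]
    rw [Finset.prod_const, hc, mul_pow, mul_pow, ← pow_mul, ← pow_mul]
  have h3 : (∏ m ∈ S, ∏ m' ∈ S.filter (fun m' => m < m'),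
        (p * (α a - α m) / (α b - α m) - p * (α a - α m') / (α b - α m')) ^ 2) *
      ((∏ m ∈ S, (α b - α m)) ^ 2) ^ c
      = p ^ (c * (c + 1)) * (α a - α b) ^ (c * (c + 1)) *
        ∏ m ∈ S, ∏ m' ∈ S.filter (fun m' => m < m'), (α m - α m') ^ 2 := by
    rw [e1, e2, ← Finset.prod_mul_distrib, ← Finset.prod_mul_distrib]
    apply Finset.prod_congr rfl
    intro m hm
    rw [← Finset.prod_mul_distrib, ← Finset.prod_mul_distrib]
    apply Finset.prod_congr rfl
    intro m' hm'
    exact h2 m hm m' (Finset.mem_filter.mp hm').1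
  have hB2c : ((∏ m ∈ S, (α b - α m)) ^ 2) ^ c ≠ 0 :=
    pow_ne_zero _ (pow_ne_zero _ hBne)
  rw [h1]
  rw [show (∏ m ∈ S, ∏ m' ∈ S.filter (fun m' => m < m'),
        (p * (α a - α m) / (α b - α m) - p * (α a - α m') / (α b - α m')) ^ 2)
      = (p ^ (c * (c + 1)) * (α a - α b) ^ (c * (c + 1)) *
        ∏ m ∈ S, ∏ m' ∈ S.filter (fun m' => m < m'), (α m - α m') ^ 2) /
        ((∏ m ∈ S, (α b - α m)) ^ 2) ^ c from by
      rw [eq_div_iff hB2c]; exact h3]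
  field_simp
  ring

set_option maxHeartbeats 2000000 in
/-- For pairwise distinct `i, j, k` and any choices of symmetric ratios for
`(i,j)`, `(i,k)` and `(j,k)`, the associated symmetric discriminants satisfy
`D_{ij}² = (ℓ_{jki}^{4g})^{2g+1} · D_{ik}²`, i.e. `D_{ij} = ℓ_{jki}^{2g(2g+1)}·D_{ik}`
up to a root of unity, independently of all choices of symmetric ratios. -/
theorem symmetric_discriminant_relation_b
    (g : ℕ) (hg : 1 ≤ g) (K : Type*) [Field K]
    (α : Fin (2*g+2) → K) (hα : Function.Injective α)
    (d : Fin (2*g+2) → K)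
    (hd : ∀ m, d m = ∏ n ∈ univ.erase m, (α m - α n))
    (i j k : Fin (2*g+2)) (hij : i ≠ j) (hik : i ≠ k) (hjk : j ≠ k)
    (pij : K) (hpij : pij ^ (4*g) = (d j / d i) ^ 2)
    (ℓij : Fin (2*g+2) → K)
    (hℓij : ∀ m, ℓij m = pij * (α i - α m) / (α j - α m))
    (pik : K) (hpik : pik ^ (4*g) = (d k / d i) ^ 2)
    (ℓik : Fin (2*g+2) → K)
    (hℓik : ∀ m, ℓik m = pik * (α i - α m) / (α k - α m))
    (pjk : K) (hpjk : pjk ^ (4*g) = (d k / d j) ^ 2)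
    (ℓjk : Fin (2*g+2) → K)
    (hℓjk : ∀ m, ℓjk m = pjk * (α j - α m) / (α k - α m))
    (Dij : K)
    (hDij : Dij = (∏ m ∈ univ \ {i, j}, ℓij m) ^ 2 *
      ∏ m ∈ univ \ {i, j}, ∏ m' ∈ (univ \ {i, j}).filter (fun m' => m < m'),
        (ℓij m - ℓij m') ^ 2)
    (Dik : K)
    (hDik : Dik = (∏ m ∈ univ \ {i, k}, ℓik m) ^ 2 *
      ∏ m ∈ univ \ {i, k}, ∏ m' ∈ (univ \ {i, k}).filter (fun m' => m < m'),
        (ℓik m - ℓik m') ^ 2) :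
    Dij ^ 2 = ((ℓjk i) ^ (4*g)) ^ (2*g+1) * Dik ^ 2 := by
  obtain ⟨h, rfl⟩ : ∃ h', g = h' + 1 := ⟨g - 1, by omega⟩
  have hne : ∀ a b : Fin (2*(h+1)+2), a ≠ b → α a - α b ≠ 0 :=
    fun a b hab => sub_ne_zero.mpr fun hh => hab (hα hh)
  set T : Finset (Fin (2*(h+1)+2)) := univ \ {i, j, k} with hT
  have hkT : k ∉ T := by simp [hT]
  have hiT : i ∉ insert k T := by simp [hT, hik]
  have hjT : j ∉ T := by simp [hT]
  have hSij : univ \ ({i, j} : Finset (Fin (2*(h+1)+2))) = insert k T := by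
    rw [hT]; ext m
    simp only [mem_sdiff, mem_univ, true_and, mem_insert, mem_singleton]
    constructor
    · intro hm; push_neg at hm
      by_cases hmk : m = k
      · exact Or.inl hmk
      · exact Or.inr (by push_neg; exact ⟨hm.1, hm.2, hmk⟩)
    · rintro (rfl | hm)
      · push_neg; exact ⟨fun e => hik (e.symm), fun e => hjk (e.symm)⟩
      · push_neg at hm ⊢; exact ⟨hm.1, hm.2.1⟩
  have hSik : univ \ ({i, k} : Finset (Fin (2*(h+1)+2))) = insert j T := by
    rw [hT]; ext m
    simp only [mem_sdiff, mem_univ, true_and, mem_insert, mem_singleton]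
    constructor
    · intro hm; push_neg at hm
      by_cases hmj : m = j
      · exact Or.inl hmj
      · exact Or.inr (by push_neg; exact ⟨hm.1, hmj, hm.2⟩)
    · rintro (rfl | hm)
      · push_neg; exact ⟨fun e => hij (e.symm), fun e => hjk e⟩
      · push_neg at hm ⊢; exact ⟨hm.1, hm.2.2⟩
  have hTcard : T.card = 2*h+1 := by
    rw [hT, Finset.card_sdiff_of_subset (Finset.subset_univ _), Finset.card_univ, Fintype.card_fin]
    rw [Finset.card_insert_of_notMem (by simp [hij, hik]),
      Finset.card_insert_of_notMem (by simp [hjk]), Finset.card_singleton]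
    omega
  have hSijcard : (univ \ ({i, j} : Finset (Fin (2*(h+1)+2)))).card = (2*h+1) + 1 := by
    rw [hSij, Finset.card_insert_of_notMem hkT, hTcard]
  have hSikcard : (univ \ ({i, k} : Finset (Fin (2*(h+1)+2)))).card = (2*h+1) + 1 := by
    rw [hSik, Finset.card_insert_of_notMem hjT, hTcard]
  -- apply the discriminant formula
  simp only [hℓij] at hDij
  simp only [hℓik] at hDik
  rw [discr_formula α i j pij _ (fun m hm => hne j m (fun e => (by simp [e] at hm : False)))
    (2*h+1) hSijcard] at hDij
  rw [discr_formula α i k pik _ (fun m hm => hne k m (fun e => (by simp [e] at hm : False)))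
    (2*h+1) hSikcard] at hDik
  -- decompose the products over insert
  rw [hSij, pair_prod_insert (fun m m' => (α m - α m') ^ 2) (fun x y => by ring) k T hkT,
    Finset.prod_insert hkT, Finset.prod_insert hkT, Finset.prod_pow] at hDij
  rw [hSik, pair_prod_insert (fun m m' => (α m - α m') ^ 2) (fun x y => by ring) j T hjT,
    Finset.prod_insert hjT, Finset.prod_insert hjT, Finset.prod_pow] at hDik
  clear hℓij hℓik
  -- name the basic quantities
  set u : K := α i - α j with hu
  set v : K := α i - α k with hv
  set w : K := α j - α k with hw
  set A : K := ∏ x ∈ T, (α i - α x) with hA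
  set Bj : K := ∏ x ∈ T, (α j - α x) with hBj
  set Bk : K := ∏ x ∈ T, (α k - α x) with hBk
  set W : K := ∏ m ∈ T, ∏ m' ∈ Finset.filter (fun m' => m < m') T, (α m - α m') ^ 2 with hW
  clear_value u v w A Bj Bk W
  -- nonvanishing
  have hu0 : u ≠ 0 := by rw [hu]; exact hne i j hij
  have hv0 : v ≠ 0 := by rw [hv]; exact hne i k hik
  have hw0 : w ≠ 0 := by rw [hw]; exact hne j k hjk
  have hmemT : ∀ m ∈ T, m ≠ i ∧ m ≠ j ∧ m ≠ k := by
    intro m hm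
    rw [hT] at hm
    simp only [mem_sdiff, mem_univ, true_and, mem_insert, mem_singleton] at hm
    push_neg at hm
    exact hm
  have hA0 : A ≠ 0 := by
    rw [hA]
    exact Finset.prod_ne_zero_iff.mpr
      (fun m hm => hne i m (fun e => (hmemT m hm).1 e.symm))
  have hBj0 : Bj ≠ 0 := by
    rw [hBj]
    exact Finset.prod_ne_zero_iff.mpr
      (fun m hm => hne j m (fun e => (hmemT m hm).2.1 e.symm))
  have hBk0 : Bk ≠ 0 := by
    rw [hBk]
    exact Finset.prod_ne_zero_iff.mpr
      (fun m hm => hne k m (fun e => (hmemT m hm).2.2 e.symm))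
  have hW0 : W ≠ 0 := by
    rw [hW]
    exact Finset.prod_ne_zero_iff.mpr (fun m hm =>
      Finset.prod_ne_zero_iff.mpr (fun m' hm' =>
        pow_ne_zero _ (hne m m' (ne_of_lt (Finset.mem_filter.mp hm').2))))
  have hdi0 : d i ≠ 0 := by
    rw [hd i]
    exact Finset.prod_ne_zero_iff.mpr (fun m hm =>
      hne i m (fun e => (Finset.mem_erase.mp hm).1 e.symm))
  have hdj0' : d j ≠ 0 := by
    rw [hd j]
    exact Finset.prod_ne_zero_iff.mpr (fun m hm =>
      hne j m (fun e => (Finset.mem_erase.mp hm).1 e.symm))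
  -- decompositions of d j and d k
  have hUj : (univ.erase j : Finset (Fin (2*(h+1)+2))) = insert i (insert k T) := by
    rw [hT]; ext m
    simp only [mem_erase, mem_univ, and_true, mem_insert, mem_sdiff, true_and, mem_singleton]
    constructor
    · intro hm
      by_cases hmi : m = i
      · exact Or.inl hmi
      · by_cases hmk : m = k
        · exact Or.inr (Or.inl hmk)
        · exact Or.inr (Or.inr (by push_neg; exact ⟨hmi, hm, hmk⟩))
    · rintro (rfl | rfl | hm)
      · exact hij
      · exact fun e => hjk e.symm
      · push_neg at hm; exact hm.2.1
  have hUk : (univ.erase k : Finset (Fin (2*(h+1)+2))) = insert i (insert j T) := by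
    rw [hT]; ext m
    simp only [mem_erase, mem_univ, and_true, mem_insert, mem_sdiff, true_and, mem_singleton]
    constructor
    · intro hm
      by_cases hmi : m = i
      · exact Or.inl hmi
      · by_cases hmj : m = j
        · exact Or.inr (Or.inl hmj)
        · exact Or.inr (Or.inr (by push_neg; exact ⟨hmi, hmj, hm⟩))
    · rintro (rfl | rfl | hm)
      · exact hik
      · exact hjk
      · push_neg at hm; exact hm.2.2
  have hiT' : i ∉ insert j T := by simp [hT, hij]
  have hdj2 : d j ^ 2 = u ^ 2 * w ^ 2 * Bj ^ 2 := by
    rw [hd j, hUj, Finset.prod_insert hiT, Finset.prod_insert hkT, ← hBj,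
      show α j - α i = -u from by rw [hu]; ring,
      show α j - α k = w from hw.symm]
    ring
  have hdk2 : d k ^ 2 = v ^ 2 * w ^ 2 * Bk ^ 2 := by
    rw [hd k, hUk, Finset.prod_insert hiT', Finset.prod_insert hjT, ← hBk,
      show α k - α i = -v from by rw [hv]; ring,
      show α k - α j = -w from by rw [hw]; ring]
    ring
  -- sign handling in hDik
  rw [show α k - α j = -w from by rw [hw]; ring] at hDik
  have hnegpow : (-w : K) ^ (2 * (2*h+1+1)) = w ^ (2 * (2*h+1+1)) :=
    Even.neg_pow ⟨2*h+1+1, by ring⟩ w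
  simp only [mul_pow] at hDij hDik
  rw [hnegpow] at hDik
  -- ℓjk i
  have hLi : ℓjk i = pjk * u / v := by
    rw [hℓjk i, show α j - α i = -u from by rw [hu]; ring,
      show α k - α i = -v from by rw [hv]; ring]
    field_simp
  -- division-free forms
  have hDijM : Dij * (w ^ (2*(2*h+1+1)) * Bj ^ (2*(2*h+1+1)))
      = pij ^ ((2*h+1+1)*(2*h+1+2)) * u ^ ((2*h+1+1)*(2*h+1)) * (v^2 * A^2) * (Bk^2 * W) := by
    rw [hDij, div_mul_cancel₀ _ (mul_ne_zero (pow_ne_zero _ hw0) (pow_ne_zero _ hBj0))]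
  have hDikM : Dik * (w ^ (2*(2*h+1+1)) * Bk ^ (2*(2*h+1+1)))
      = pik ^ ((2*h+1+1)*(2*h+1+2)) * v ^ ((2*h+1+1)*(2*h+1)) * (u^2 * A^2) * (Bj^2 * W) := by
    rw [hDik, div_mul_cancel₀ _ (mul_ne_zero (pow_ne_zero _ hw0) (pow_ne_zero _ hBk0))]
  have hLiM : ℓjk i * v = pjk * u := by
    rw [hLi, div_mul_cancel₀ _ hv0]
  rw [div_pow, eq_div_iff (pow_ne_zero 2 hdi0)] at hpij hpik
  rw [div_pow, eq_div_iff (pow_ne_zero 2 hdj0')] at hpjk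
  -- power conversions
  have hPIJ : (pij ^ (4*(h+1))) ^ (2*(h+1)+1) * (d i ^ 2) ^ (2*(h+1)+1)
      = (u^2) ^ (2*(h+1)+1) * (w^2) ^ (2*(h+1)+1) * (Bj^2) ^ (2*(h+1)+1) := by
    rw [← mul_pow, hpij, hdj2, mul_pow, mul_pow]
  have hPIK : (pik ^ (4*(h+1))) ^ (2*(h+1)+1) * (d i ^ 2) ^ (2*(h+1)+1)
      = (v^2) ^ (2*(h+1)+1) * (w^2) ^ (2*(h+1)+1) * (Bk^2) ^ (2*(h+1)+1) := by
    rw [← mul_pow, hpik, hdk2, mul_pow, mul_pow]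
  have hPJK : (pjk ^ (4*(h+1))) ^ (2*(h+1)+1) *
        ((u^2) ^ (2*(h+1)+1) * (w^2) ^ (2*(h+1)+1) * (Bj^2) ^ (2*(h+1)+1))
      = (v^2) ^ (2*(h+1)+1) * (w^2) ^ (2*(h+1)+1) * (Bk^2) ^ (2*(h+1)+1) := by
    rw [show (u^2) ^ (2*(h+1)+1) * (w^2) ^ (2*(h+1)+1) * (Bj^2) ^ (2*(h+1)+1)
        = (d j ^ 2) ^ (2*(h+1)+1) from by rw [hdj2, mul_pow, mul_pow],
      ← mul_pow, hpjk, hdk2, mul_pow, mul_pow]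
  have hLN : (ℓjk i ^ (4*(h+1))) ^ (2*(h+1)+1) * (v ^ (4*(h+1))) ^ (2*(h+1)+1)
      = (pjk ^ (4*(h+1))) ^ (2*(h+1)+1) * (u ^ (4*(h+1))) ^ (2*(h+1)+1) := by
    rw [← mul_pow, ← mul_pow, hLiM, mul_pow, mul_pow]
  -- the common middle expression
  have hC : ((w ^ (2*(2*h+1+1)) * Bj ^ (2*(2*h+1+1)))^2 *
      (w ^ (2*(2*h+1+1)) * Bk ^ (2*(2*h+1+1)))^2 *
      (d i ^ 2) ^ (2*(h+1)+1) * (v ^ (4*(h+1))) ^ (2*(h+1)+1) *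
      ((u^2) ^ (2*(h+1)+1) * (w^2) ^ (2*(h+1)+1) * (Bj^2) ^ (2*(h+1)+1))) ≠ 0 := by
    apply_rules [mul_ne_zero, pow_ne_zero]
  refine mul_right_cancel₀ hC ?_
  have LHSstep : Dij ^ 2 * ((w ^ (2*(2*h+1+1)) * Bj ^ (2*(2*h+1+1)))^2 *
      (w ^ (2*(2*h+1+1)) * Bk ^ (2*(2*h+1+1)))^2 *
      (d i ^ 2) ^ (2*(h+1)+1) * (v ^ (4*(h+1))) ^ (2*(h+1)+1) *
      ((u^2) ^ (2*(h+1)+1) * (w^2) ^ (2*(h+1)+1) * (Bj^2) ^ (2*(h+1)+1)))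
      = ((u^2) ^ (2*(h+1)+1) * (w^2) ^ (2*(h+1)+1) * (Bj^2) ^ (2*(h+1)+1)) *
        ((v ^ (4*(h+1))) ^ (2*(h+1)+1) *
          ((u^2) ^ (2*(h+1)+1) * (w^2) ^ (2*(h+1)+1) * (Bj^2) ^ (2*(h+1)+1)) *
          (u ^ ((2*h+1+1)*(2*h+1)) * u ^ ((2*h+1+1)*(2*h+1)) * v^4 * A^4 * Bk^4 * W^2 *
            (w ^ (2*(2*h+1+1)) * Bk ^ (2*(2*h+1+1)))^2)) := by
    calc Dij ^ 2 * ((w ^ (2*(2*h+1+1)) * Bj ^ (2*(2*h+1+1)))^2 *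
        (w ^ (2*(2*h+1+1)) * Bk ^ (2*(2*h+1+1)))^2 *
        (d i ^ 2) ^ (2*(h+1)+1) * (v ^ (4*(h+1))) ^ (2*(h+1)+1) *
        ((u^2) ^ (2*(h+1)+1) * (w^2) ^ (2*(h+1)+1) * (Bj^2) ^ (2*(h+1)+1)))
        = (Dij * (w ^ (2*(2*h+1+1)) * Bj ^ (2*(2*h+1+1))))^2 *
          ((w ^ (2*(2*h+1+1)) * Bk ^ (2*(2*h+1+1)))^2 *
          (d i ^ 2) ^ (2*(h+1)+1) * (v ^ (4*(h+1))) ^ (2*(h+1)+1) *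
          ((u^2) ^ (2*(h+1)+1) * (w^2) ^ (2*(h+1)+1) * (Bj^2) ^ (2*(h+1)+1))) := by ring
      _ = (pij ^ ((2*h+1+1)*(2*h+1+2)) * u ^ ((2*h+1+1)*(2*h+1)) * (v^2 * A^2) * (Bk^2 * W))^2 *
          ((w ^ (2*(2*h+1+1)) * Bk ^ (2*(2*h+1+1)))^2 *
          (d i ^ 2) ^ (2*(h+1)+1) * (v ^ (4*(h+1))) ^ (2*(h+1)+1) *
          ((u^2) ^ (2*(h+1)+1) * (w^2) ^ (2*(h+1)+1) * (Bj^2) ^ (2*(h+1)+1))) := by rw [hDijM]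
      _ = ((pij ^ (4*(h+1))) ^ (2*(h+1)+1) * (d i ^ 2) ^ (2*(h+1)+1)) *
          ((v ^ (4*(h+1))) ^ (2*(h+1)+1) *
          ((u^2) ^ (2*(h+1)+1) * (w^2) ^ (2*(h+1)+1) * (Bj^2) ^ (2*(h+1)+1)) *
          (u ^ ((2*h+1+1)*(2*h+1)) * u ^ ((2*h+1+1)*(2*h+1)) * v^4 * A^4 * Bk^4 * W^2 *
            (w ^ (2*(2*h+1+1)) * Bk ^ (2*(2*h+1+1)))^2)) := by ring
      _ = ((u^2) ^ (2*(h+1)+1) * (w^2) ^ (2*(h+1)+1) * (Bj^2) ^ (2*(h+1)+1)) *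
          ((v ^ (4*(h+1))) ^ (2*(h+1)+1) *
          ((u^2) ^ (2*(h+1)+1) * (w^2) ^ (2*(h+1)+1) * (Bj^2) ^ (2*(h+1)+1)) *
          (u ^ ((2*h+1+1)*(2*h+1)) * u ^ ((2*h+1+1)*(2*h+1)) * v^4 * A^4 * Bk^4 * W^2 *
            (w ^ (2*(2*h+1+1)) * Bk ^ (2*(2*h+1+1)))^2)) := by rw [hPIJ]
  have RHSstep : (ℓjk i ^ (4*(h+1))) ^ (2*(h+1)+1) * Dik ^ 2 *
      ((w ^ (2*(2*h+1+1)) * Bj ^ (2*(2*h+1+1)))^2 *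
      (w ^ (2*(2*h+1+1)) * Bk ^ (2*(2*h+1+1)))^2 *
      (d i ^ 2) ^ (2*(h+1)+1) * (v ^ (4*(h+1))) ^ (2*(h+1)+1) *
      ((u^2) ^ (2*(h+1)+1) * (w^2) ^ (2*(h+1)+1) * (Bj^2) ^ (2*(h+1)+1)))
      = ((u^2) ^ (2*(h+1)+1) * (w^2) ^ (2*(h+1)+1) * (Bj^2) ^ (2*(h+1)+1)) *
        ((v ^ (4*(h+1))) ^ (2*(h+1)+1) *
          ((u^2) ^ (2*(h+1)+1) * (w^2) ^ (2*(h+1)+1) * (Bj^2) ^ (2*(h+1)+1)) *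
          (u ^ ((2*h+1+1)*(2*h+1)) * u ^ ((2*h+1+1)*(2*h+1)) * v^4 * A^4 * Bk^4 * W^2 *
            (w ^ (2*(2*h+1+1)) * Bk ^ (2*(2*h+1+1)))^2)) := by
    calc (ℓjk i ^ (4*(h+1))) ^ (2*(h+1)+1) * Dik ^ 2 *
        ((w ^ (2*(2*h+1+1)) * Bj ^ (2*(2*h+1+1)))^2 *
        (w ^ (2*(2*h+1+1)) * Bk ^ (2*(2*h+1+1)))^2 *
        (d i ^ 2) ^ (2*(h+1)+1) * (v ^ (4*(h+1))) ^ (2*(h+1)+1) *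
        ((u^2) ^ (2*(h+1)+1) * (w^2) ^ (2*(h+1)+1) * (Bj^2) ^ (2*(h+1)+1)))
        = ((ℓjk i ^ (4*(h+1))) ^ (2*(h+1)+1) * (v ^ (4*(h+1))) ^ (2*(h+1)+1)) *
          ((Dik * (w ^ (2*(2*h+1+1)) * Bk ^ (2*(2*h+1+1))))^2 *
          ((w ^ (2*(2*h+1+1)) * Bj ^ (2*(2*h+1+1)))^2 *
          ((d i ^ 2) ^ (2*(h+1)+1) *
          ((u^2) ^ (2*(h+1)+1) * (w^2) ^ (2*(h+1)+1) * (Bj^2) ^ (2*(h+1)+1))))) := by ring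
      _ = ((pjk ^ (4*(h+1))) ^ (2*(h+1)+1) * (u ^ (4*(h+1))) ^ (2*(h+1)+1)) *
          ((pik ^ ((2*h+1+1)*(2*h+1+2)) * v ^ ((2*h+1+1)*(2*h+1)) * (u^2 * A^2) * (Bj^2 * W))^2 *
          ((w ^ (2*(2*h+1+1)) * Bj ^ (2*(2*h+1+1)))^2 *
          ((d i ^ 2) ^ (2*(h+1)+1) *
          ((u^2) ^ (2*(h+1)+1) * (w^2) ^ (2*(h+1)+1) * (Bj^2) ^ (2*(h+1)+1))))) := by
        rw [hLN, hDikM]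
      _ = ((pjk ^ (4*(h+1))) ^ (2*(h+1)+1) *
            ((u^2) ^ (2*(h+1)+1) * (w^2) ^ (2*(h+1)+1) * (Bj^2) ^ (2*(h+1)+1))) *
          (((pik ^ (4*(h+1))) ^ (2*(h+1)+1) * (d i ^ 2) ^ (2*(h+1)+1)) *
          ((u ^ (4*(h+1))) ^ (2*(h+1)+1) *
            (v ^ ((2*h+1+1)*(2*h+1)) * v ^ ((2*h+1+1)*(2*h+1)) * u^4 * A^4 * Bj^4 * W^2 *
              (w ^ (2*(2*h+1+1)) * Bj ^ (2*(2*h+1+1)))^2))) := by ring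
      _ = ((v^2) ^ (2*(h+1)+1) * (w^2) ^ (2*(h+1)+1) * (Bk^2) ^ (2*(h+1)+1)) *
          (((v^2) ^ (2*(h+1)+1) * (w^2) ^ (2*(h+1)+1) * (Bk^2) ^ (2*(h+1)+1)) *
          ((u ^ (4*(h+1))) ^ (2*(h+1)+1) *
            (v ^ ((2*h+1+1)*(2*h+1)) * v ^ ((2*h+1+1)*(2*h+1)) * u^4 * A^4 * Bj^4 * W^2 *
              (w ^ (2*(2*h+1+1)) * Bj ^ (2*(2*h+1+1)))^2))) := by rw [hPJK, hPIK]
      _ = ((u^2) ^ (2*(h+1)+1) * (w^2) ^ (2*(h+1)+1) * (Bj^2) ^ (2*(h+1)+1)) *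
          ((v ^ (4*(h+1))) ^ (2*(h+1)+1) *
          ((u^2) ^ (2*(h+1)+1) * (w^2) ^ (2*(h+1)+1) * (Bj^2) ^ (2*(h+1)+1)) *
          (u ^ ((2*h+1+1)*(2*h+1)) * u ^ ((2*h+1+1)*(2*h+1)) * v^4 * A^4 * Bk^4 * W^2 *
            (w ^ (2*(2*h+1+1)) * Bk ^ (2*(2*h+1+1)))^2)) := by ring
  exact LHSstep.trans RHSstep.symm
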